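/- For 0 < α < 1, consider the subharmonic function u^α(z) := −(−log|z|)^α on the disc {|z| < 1−ε} in ℂ. Then the L¹-energy E₁(u^α) := ∫ (−u^α) dd^c u^α is finite when α < 1/2 and infinite when 1/2 ≤ α < 1. -/

import Mathlib

open Filter MeasureTheory Metric Set
open scoped ENNReal Topology

noncomputable section

/-- `μ` is the Riesz measure `dd^c u` of a (negative subharmonic) function `u` on the planar
domain `D`, normalized so that `dd^c log|z| = δ₀`: for every smooth compactly supported test
function `φ` with support in `D`, `∫ u Δφ = 2π ∫ φ dμ`. -/
def IsRieszMeasureOn (D : Set ℂ) (u : ℂ → ℝ) (μ : Measure ℂ) : Prop :=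
  ∀ φ : ℂ → ℝ, ContDiff ℝ (⊤ : ℕ∞) φ → HasCompactSupport φ → tsupport φ ⊆ D →
    ∫ z : ℂ, u z * (iteratedFDeriv ℝ 2 φ z ![1, 1]
        + iteratedFDeriv ℝ 2 φ z ![Complex.I, Complex.I])
      = 2 * Real.pi * ∫ z : ℂ, φ z ∂μ

namespace EnergyProofAux

variable {H : ℝ → ℝ} {a b : ℝ}

lemma Hev (hsupp : ∀ t, t ∉ Ioo a b → H t = 0) {t : ℝ} (ht : t < a ∨ b < t) :
    H =ᶠ[𝓝 t] 0 := by
  rcases ht with ht | ht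
  · filter_upwards [Iio_mem_nhds ht] with s hs
    exact hsupp s fun hmem => absurd hmem.1 (not_lt.mpr hs.le)
  · filter_upwards [Ioi_mem_nhds ht] with s hs
    exact hsupp s fun hmem => absurd hmem.2 (not_lt.mpr (le_of_lt hs))

lemma H_zero (hsupp : ∀ t, t ∉ Ioo a b → H t = 0) {t : ℝ} (ht : t < a ∨ b < t) : H t = 0 :=
  (Hev hsupp ht).eq_of_nhds

lemma deriv_zero_fun : deriv (0 : ℝ → ℝ) = 0 := by
  funext x
  exact deriv_const x 0

lemma H1_zero (hsupp : ∀ t, t ∉ Ioo a b → H t = 0) {t : ℝ} (ht : t < a ∨ b < t) :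
    deriv H t = 0 := by
  have h := ((Hev hsupp ht).deriv).eq_of_nhds
  rw [h, deriv_zero_fun]
  rfl

lemma H2_zero (hsupp : ∀ t, t ∉ Ioo a b → H t = 0) {t : ℝ} (ht : t < a ∨ b < t) :
    deriv (deriv H) t = 0 := by
  have h := ((Hev hsupp ht).deriv.deriv).eq_of_nhds
  rw [h, deriv_zero_fun, deriv_zero_fun]
  rfl

lemma phi_contDiff (hH : ContDiff ℝ (⊤:ℕ∞) H) (ha : 0 < a)
    (hsupp : ∀ t, t ∉ Ioo a b → H t = 0) :
    ContDiff ℝ (⊤:ℕ∞) (fun z : ℂ => H (-Real.log (‖z‖))) := by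
  rw [contDiff_iff_contDiffAt]
  intro z
  by_cases hz : z = 0
  · subst hz
    have hball : ∀ w ∈ ball (0:ℂ) (Real.exp (-b)), H (-Real.log (‖w‖)) = 0 := by
      intro w hw
      simp only [mem_ball, dist_zero_right] at hw
      apply hsupp
      rintro ⟨h1, h2⟩
      by_cases hw0 : w = 0
      · rw [hw0] at h1; simp at h1; linarith
      · have habs : 0 < ‖w‖ := by simpa [norm_pos_iff] using hw0
        have := Real.log_lt_log habs hw
        rw [Real.log_exp] at this
        linarith
    have hmem : ball (0:ℂ) (Real.exp (-b)) ∈ 𝓝 (0:ℂ) := ball_mem_nhds _ (Real.exp_pos _)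
    refine contDiffAt_const (c := 0) |>.congr_of_eventuallyEq ?_
    filter_upwards [hmem] with w hw using hball w hw
  · have habs : ‖z‖ ≠ 0 := by simpa [norm_ne_zero_iff] using hz
    have h1 : ContDiffAt ℝ (⊤:ℕ∞) (⇑Complex.normSq) z := by
      have : ⇑Complex.normSq = fun z : ℂ => z.re*z.re + z.im*z.im := funext Complex.normSq_apply
      rw [this]
      exact ((Complex.reCLM.contDiff.mul Complex.reCLM.contDiff).add
        (Complex.imCLM.contDiff.mul Complex.imCLM.contDiff)).contDiffAt
    have hnsq : Complex.normSq z ≠ 0 := by simpa [Complex.normSq_pos] using hz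
    have h2 : ContDiffAt ℝ (⊤:ℕ∞) (fun w : ℂ => ‖w‖) z := by
      have heq : (fun w : ℂ => ‖w‖) = fun w : ℂ => Real.sqrt (Complex.normSq w) :=
        funext fun w => Complex.norm_def w
      rw [heq]
      exact (Real.contDiffAt_sqrt hnsq).comp z h1
    have h3 : ContDiffAt ℝ (⊤:ℕ∞) (fun w : ℂ => -Real.log (‖w‖)) z :=
      ((Real.contDiffAt_log.mpr habs).comp z h2).neg
    exact hH.contDiffAt.comp z h3

lemma phi_zero_far (ha : 0 < a) (hsupp : ∀ t, t ∉ Ioo a b → H t = 0) {z : ℂ}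
    (hz : Real.exp (-a) ≤ ‖z‖) : H (-Real.log (‖z‖)) = 0 := by
  apply hsupp
  rintro ⟨h1, _⟩
  have habs : 0 < ‖z‖ := lt_of_lt_of_le (Real.exp_pos _) hz
  have := Real.log_le_log (Real.exp_pos _) hz
  rw [Real.log_exp] at this
  linarith

/-- The continuous linear map `z ↦ (v ↦ 2 z.re v.re + 2 z.im v.im)`, the derivative of `normSq`. -/
def DD : ℂ →L[ℝ] ℂ →L[ℝ] ℝ :=
  (((2:ℝ) • Complex.reCLM).smulRight Complex.reCLM) +
    (((2:ℝ) • Complex.imCLM).smulRight Complex.imCLM)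

@[simp] lemma DD_apply (z v : ℂ) : DD z v = 2 * z.re * v.re + 2 * z.im * v.im := by
  simp [DD, mul_assoc]

lemma hasFDerivAt_normSq (z : ℂ) : HasFDerivAt (⇑Complex.normSq) (DD z) z := by
  have h : ⇑Complex.normSq = fun w : ℂ => w.re*w.re + w.im*w.im := funext Complex.normSq_apply
  rw [h]
  have h1 := (Complex.reCLM.hasFDerivAt (x := z)).fun_mul (Complex.reCLM.hasFDerivAt (x := z))
  have h2 := (Complex.imCLM.hasFDerivAt (x := z)).fun_mul (Complex.imCLM.hasFDerivAt (x := z))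
  have h3 := h1.fun_add h2
  refine h3.congr_fderiv ?_
  ext v
  simp [DD]
  ring

private lemma alg_lemma (c1 c2 A x y : ℝ) (hA : 0 < A) (hq : x^2 + y^2 = A^2) :
    c1 * -((A ^ 2)⁻¹ / 2) * (2 * 1 * 1 + 2 * 0 * 0) +
      (c2 * -((A ^ 2)⁻¹ / 2) * -((A ^ 2)⁻¹ / 2) + c1 * (((A ^ 2) ^ 2)⁻¹ / 2)) *
        (2 * x * 1 + 2 * y * 0) * (2 * x * 1 + 2 * y * 0) +
      (c1 * -((A ^ 2)⁻¹ / 2) * (2 * 0 * 0 + 2 * 1 * 1) +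
        (c2 * -((A ^ 2)⁻¹ / 2) * -((A ^ 2)⁻¹ / 2) + c1 * (((A ^ 2) ^ 2)⁻¹ / 2)) *
          (2 * x * 0 + 2 * y * 1) * (2 * x * 0 + 2 * y * 1)) = c2 / A ^ 2 := by
  have hA0 : A ≠ 0 := hA.ne'
  have key : c1 * -((A ^ 2)⁻¹ / 2) * (2 * 1 * 1 + 2 * 0 * 0) +
      (c2 * -((A ^ 2)⁻¹ / 2) * -((A ^ 2)⁻¹ / 2) + c1 * (((A ^ 2) ^ 2)⁻¹ / 2)) *
        (2 * x * 1 + 2 * y * 0) * (2 * x * 1 + 2 * y * 0) +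
      (c1 * -((A ^ 2)⁻¹ / 2) * (2 * 0 * 0 + 2 * 1 * 1) +
        (c2 * -((A ^ 2)⁻¹ / 2) * -((A ^ 2)⁻¹ / 2) + c1 * (((A ^ 2) ^ 2)⁻¹ / 2)) *
          (2 * x * 0 + 2 * y * 1) * (2 * x * 0 + 2 * y * 1))
      = -2*c1/A^2 + (c2 * ((A^2)⁻¹/2) * ((A^2)⁻¹/2) + c1/(2*A^4))*(4*(x^2+y^2)) := by
    ring
  rw [key, hq]
  field_simp
  ring

lemma phi_laplacian (hH : ContDiff ℝ (⊤:ℕ∞) H) {z : ℂ} (hz : z ≠ 0) :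
    iteratedFDeriv ℝ 2 (fun w : ℂ => H (-Real.log (‖w‖))) z ![1, 1]
      + iteratedFDeriv ℝ 2 (fun w : ℂ => H (-Real.log (‖w‖))) z ![Complex.I, Complex.I]
      = deriv (deriv H) (-Real.log (‖z‖)) / (‖z‖)^2 := by
  have hdiffH : Differentiable ℝ H := hH.differentiable (by simp)
  have hH1 : ContDiff ℝ (⊤:ℕ∞) (deriv H) := (contDiff_infty_iff_deriv.mp hH).2
  have hdiffH1 : Differentiable ℝ (deriv H) := hH1.differentiable (by simp)
  set H1 := deriv H with hH1def
  set H2 := deriv (deriv H) with hH2def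
  set N : ℂ → ℝ := ⇑Complex.normSq with hNdef
  set inner' : ℝ → ℝ := fun q => -(Real.log q / 2) with hinner
  set J : ℝ → ℝ := fun q => H (inner' q) with hJ
  set J1 : ℝ → ℝ := fun q => H1 (inner' q) * (-(q⁻¹/2)) with hJ1
  set φ : ℂ → ℝ := fun w : ℂ => H (-Real.log (‖w‖)) with hφ
  -- φ = J ∘ N
  have hφeq : φ = fun w => J (N w) := by
    funext w
    simp only [hφ, hJ, hNdef, hinner]
    congr 1
    rw [Complex.normSq_eq_norm_sq, Real.log_pow]
    push_cast
    ring
  -- inner function derivative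
  have hinnerD : ∀ q : ℝ, q ≠ 0 → HasDerivAt inner' (-(q⁻¹/2)) q := fun q hq =>
    ((Real.hasDerivAt_log hq).div_const 2).neg
  have hJD : ∀ q : ℝ, q ≠ 0 → HasDerivAt J (J1 q) q := by
    intro q hq
    exact ((hdiffH _).hasDerivAt.comp q (hinnerD q hq))
  have hJ1D : ∀ q : ℝ, q ≠ 0 →
      HasDerivAt J1 (H2 (inner' q) * (-(q⁻¹/2)) * (-(q⁻¹/2)) + H1 (inner' q) * ((q^2)⁻¹/2)) q := by
    intro q hq
    have hc : HasDerivAt (fun q => H1 (inner' q)) (H2 (inner' q) * (-(q⁻¹/2))) q :=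
      (hdiffH1 _).hasDerivAt.comp q (hinnerD q hq)
    have hd : HasDerivAt (fun q : ℝ => -(q⁻¹/2)) ((q^2)⁻¹/2) q := by
      have := ((hasDerivAt_inv hq).div_const 2).fun_neg
      exact this.congr_deriv (by ring)
    exact hc.mul hd
  -- first derivative of φ off 0
  have hfd : ∀ w : ℂ, w ≠ 0 → HasFDerivAt φ (J1 (N w) • DD w) w := by
    intro w hw
    rw [hφeq]
    have hq : N w ≠ 0 := by
      simpa [hNdef] using (Complex.normSq_pos.mpr hw).ne'
    exact (hJD (N w) hq).comp_hasFDerivAt w (hasFDerivAt_normSq w)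
  set Ψ : ℂ → (ℂ →L[ℝ] ℝ) := fun w => J1 (N w) • DD w with hΨ
  have hNz : N z ≠ 0 := by simpa [hNdef] using (Complex.normSq_pos.mpr hz).ne'
  have hΨD : HasFDerivAt Ψ
      ((J1 (N z)) • (DD : ℂ →L[ℝ] ℂ →L[ℝ] ℝ)
        + ((H2 (inner' (N z)) * (-((N z)⁻¹/2)) * (-((N z)⁻¹/2))
            + H1 (inner' (N z)) * (((N z)^2)⁻¹/2)) • DD z).smulRight (DD z)) z := by
    have hA : HasFDerivAt (fun w => J1 (N w))
        ((H2 (inner' (N z)) * (-((N z)⁻¹/2)) * (-((N z)⁻¹/2))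
            + H1 (inner' (N z)) * (((N z)^2)⁻¹/2)) • DD z) z :=
      (hJ1D (N z) hNz).comp_hasFDerivAt z (hasFDerivAt_normSq z)
    exact hA.smul (DD.hasFDerivAt (x := z))
  have hevfd : fderiv ℝ φ =ᶠ[𝓝 z] Ψ := by
    filter_upwards [isOpen_compl_singleton.mem_nhds hz] with w hw
    exact (hfd w hw).fderiv
  have h2nd : fderiv ℝ (fderiv ℝ φ) z
      = (J1 (N z)) • (DD : ℂ →L[ℝ] ℂ →L[ℝ] ℝ)
        + ((H2 (inner' (N z)) * (-((N z)⁻¹/2)) * (-((N z)⁻¹/2))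
            + H1 (inner' (N z)) * (((N z)^2)⁻¹/2)) • DD z).smulRight (DD z) := by
    rw [hevfd.fderiv_eq]
    exact hΨD.fderiv
  rw [iteratedFDeriv_two_apply, iteratedFDeriv_two_apply, h2nd]
  have hre : (Complex.I).re = 0 := Complex.I_re
  have him : (Complex.I).im = 1 := Complex.I_im
  have hone_re : (1:ℂ).re = 1 := Complex.one_re
  have hone_im : (1:ℂ).im = 0 := Complex.one_im
  simp only [Matrix.cons_val_zero, Matrix.cons_val_one, Matrix.head_cons,
    ContinuousLinearMap.add_apply, ContinuousLinearMap.smul_apply,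
    ContinuousLinearMap.smulRight_apply, DD_apply, smul_eq_mul,
    hre, him, hone_re, hone_im]
  -- now pure algebra
  have hq : N z = (‖z‖)^2 := Complex.normSq_eq_norm_sq z
  have habs : (0:ℝ) < ‖z‖ := by
    simpa [norm_pos_iff] using hz
  have hinnerval : inner' (N z) = -Real.log (‖z‖) := by
    simp only [hinner, hq, Real.log_pow]
    push_cast; ring
  have hqval : z.re^2 + z.im^2 = (‖z‖)^2 := by
    rw [← hq]; simp [hNdef, Complex.normSq_apply]; ring
  simp only [hJ1]
  rw [hinnerval, hq]
  exact alg_lemma _ _ _ z.re z.im habs hqval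



theorem key (α R : ℝ) (hα0 : 0 < α) (hα1 : α < 1) (hR0 : 0 < R) (hR1 : R < 1)
    (u : ℂ → ℝ) (hu : u = fun z : ℂ => -(-Real.log (‖z‖)) ^ α)
    (μ : Measure ℂ) [IsFiniteMeasureOnCompacts μ]
    (hμ : IsRieszMeasureOn (Metric.ball (0:ℂ) R) u μ)
    (H : ℝ → ℝ) (hH : ContDiff ℝ (⊤:ℕ∞) H)
    {t1 a b t2 : ℝ} (ht1 : -Real.log R < t1) (h1a : t1 < a) (hab : a ≤ b) (hbt2 : b < t2)
    (hsupp : ∀ t, t ∉ Ioo a b → H t = 0) :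
    ∫ z : ℂ, H (-Real.log (‖z‖)) ∂μ
      = α * (1 - α) * ∫ t in t1..t2, t ^ (α - 2) * H t := by
  have hlogR : 0 < -Real.log R := by
    have := Real.log_neg hR0 hR1
    linarith
  have ht1pos : 0 < t1 := lt_trans hlogR ht1
  have hapos : 0 < a := lt_trans ht1pos h1a
  have ht1t2 : t1 < t2 := by linarith
  set H1 : ℝ → ℝ := deriv H with hH1def
  set H2f : ℝ → ℝ := deriv (deriv H) with hH2def
  have hH1c : ContDiff ℝ (⊤:ℕ∞) H1 := (contDiff_infty_iff_deriv.mp hH).2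
  have hH2c : ContDiff ℝ (⊤:ℕ∞) H2f := (contDiff_infty_iff_deriv.mp hH1c).2
  set φ : ℂ → ℝ := fun z : ℂ => H (-Real.log (‖z‖)) with hφdef
  have hφc : ContDiff ℝ (⊤:ℕ∞) φ := phi_contDiff hH hapos hsupp
  -- support facts
  have hsubball : Function.support φ ⊆ closedBall (0:ℂ) (Real.exp (-a)) := by
    intro z hz
    simp only [mem_closedBall, dist_zero_right]
    by_contra hcon
    exact hz (phi_zero_far hapos hsupp (le_of_lt (not_le.mp hcon)))
  have htsub : tsupport φ ⊆ closedBall (0:ℂ) (Real.exp (-a)) :=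
    closure_minimal hsubball isClosed_closedBall
  have hφcs : HasCompactSupport φ :=
    HasCompactSupport.intro (isCompact_closedBall (0:ℂ) (Real.exp (-a))) fun z hz => by
      by_contra hcon
      exact hz (hsubball (Function.mem_support.mpr hcon))
  have hea : Real.exp (-a) < R := by
    have : -a < Real.log R := by linarith
    calc Real.exp (-a) < Real.exp (Real.log R) := Real.exp_lt_exp.mpr this
    _ = R := Real.exp_log hR0
  have hμφ := hμ φ hφc hφcs (htsub.trans (closedBall_subset_ball hea))
  -- pointwise Laplacian
  set g : ℝ → ℝ := fun r => (-(-Real.log r) ^ α) * (H2f (-Real.log r) / r^2) with hgdef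
  have hptwise : (fun z : ℂ => u z * (iteratedFDeriv ℝ 2 φ z ![1, 1]
        + iteratedFDeriv ℝ 2 φ z ![Complex.I, Complex.I])) = fun z : ℂ => g ‖z‖ := by
    funext z
    by_cases hz : z = 0
    · subst hz
      have hu0 : u 0 = 0 := by
        rw [hu]; simp [Real.zero_rpow hα0.ne']
      have hg0 : g ‖(0:ℂ)‖ = 0 := by
        simp [hgdef, Real.zero_rpow hα0.ne']
      rw [hu0, hg0, zero_mul]
    · rw [phi_laplacian hH hz, hu]
  rw [hptwise] at hμφ
  rw [MeasureTheory.integral_fun_norm_addHaar (volume : Measure ℂ) g] at hμφ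
  simp only [Complex.finrank_real_complex, smul_eq_mul, nsmul_eq_mul, Nat.cast_ofNat,
    pow_one] at hμφ
  have hvol : volume.real (ball (0:ℂ) 1) = Real.pi := by
    rw [Measure.real, Complex.volume_ball]
    simp [ENNReal.toReal_mul, ENNReal.toReal_pow]
  rw [hvol] at hμφ
  norm_num at hμφ
  -- restrict the radial integral
  set ra := Real.exp (-t2) with hradef
  set rb := Real.exp (-t1) with hrbdef
  have hrapos : 0 < ra := Real.exp_pos _
  have hrarb : ra ≤ rb := Real.exp_le_exp.mpr (by linarith)
  have hgzero : ∀ y : ℝ, y ∈ Ioi (0:ℝ) → y ∉ Ioc ra rb → y * g y = 0 := by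
    intro y hy hyn
    have hy0 : (0:ℝ) < y := hy
    have : H2f (-Real.log y) = 0 := by
      by_cases h : ra < y
      · -- rb < y
        have hyrb : rb < y := (by simpa [Set.mem_Ioc] using hyn : ra < y → rb < y) h
        have hlog : -t1 < Real.log y := by
          have := Real.log_lt_log (Real.exp_pos _) hyrb
          rwa [Real.log_exp] at this
        exact H2_zero hsupp (Or.inl (by linarith))
      · -- y ≤ ra
        have hyra : y ≤ ra := not_lt.mp h
        have hlog : Real.log y ≤ -t2 := by
          have := Real.log_le_log hy0 hyra
          rwa [hradef, Real.log_exp] at this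
        exact H2_zero hsupp (Or.inr (by linarith))
    simp [hgdef, this]

  -- restrict radial integral to Ioc
  have hIoc : ∫ y in Ioi (0:ℝ), y * g y = ∫ y in Ioc ra rb, y * g y := by
    rw [← integral_indicator measurableSet_Ioi, ← integral_indicator measurableSet_Ioc]
    congr 1
    funext y
    by_cases h1 : y ∈ Ioc ra rb
    · have h2 : y ∈ Ioi (0:ℝ) := lt_trans hrapos h1.1
      simp [h1, h2]
    · by_cases h2 : y ∈ Ioi (0:ℝ)
      · simp [h1, h2, hgzero y h2 h1]
      · simp [h1, h2]
  -- continuity of the radial integrand on positives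
  have hgcont : ∀ y : ℝ, 0 < y → ContinuousAt (fun y : ℝ => y * g y) y := by
    intro y hy
    have hc1 : ContinuousAt (fun r : ℝ => -Real.log r) y := (Real.continuousAt_log hy.ne').neg
    have hc2 : ContinuousAt (fun r : ℝ => (-Real.log r) ^ α) y :=
      (Real.continuousAt_rpow_const _ _ (Or.inr hα0.le)).comp hc1
    have hc3 : ContinuousAt (fun r : ℝ => H2f (-Real.log r)) y :=
      (hH2c.continuous.continuousAt).comp hc1
    have hc4 : ContinuousAt (fun r : ℝ => r ^ 2) y := (continuous_pow 2).continuousAt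
    have hden : y ^ 2 ≠ 0 := pow_ne_zero 2 hy.ne'
    exact continuousAt_id.mul ((hc2.neg).mul (hc3.div hc4 hden))
  -- substitution r = exp (-t)
  have hder : ∀ x ∈ uIcc t1 t2, HasDerivAt (fun t : ℝ => Real.exp (-t)) (-Real.exp (-x)) x := by
    intro x _
    have h := (Real.hasDerivAt_exp (-x)).comp x ((hasDerivAt_id x).neg)
    exact h.congr_deriv (by ring)
  have hcont' : ContinuousOn (fun x : ℝ => -Real.exp (-x)) (uIcc t1 t2) :=
    Continuous.continuousOn (by continuity)
  have hgcont' : ContinuousOn (fun y : ℝ => y * g y)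
      ((fun t : ℝ => Real.exp (-t)) '' uIcc t1 t2) := by
    rintro y ⟨x, -, rfl⟩
    exact (hgcont _ (Real.exp_pos _)).continuousWithinAt
  have hsub := intervalIntegral.integral_comp_smul_deriv' hder hcont' hgcont'
  have hLHSeq : ∫ x in t1..t2,
        (-Real.exp (-x)) • ((fun y : ℝ => y * g y) ∘ (fun t : ℝ => Real.exp (-t))) x
      = ∫ x in t1..t2, x ^ α * H2f x := by
    apply intervalIntegral.integral_congr
    intro x _
    have hex : Real.exp (-x) ≠ 0 := Real.exp_ne_zero _
    simp only [Function.comp, smul_eq_mul, hgdef, Real.log_exp, neg_neg]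
    field_simp
  rw [hLHSeq] at hsub
  -- conclude the radial identity
  rw [← hrbdef, ← hradef] at hsub
  have hradial : ∫ y in Ioi (0:ℝ), y * g y = - ∫ t in t1..t2, t ^ α * H2f t := by
    rw [hIoc, ← intervalIntegral.integral_of_le hrarb, intervalIntegral.integral_symm rb ra, ← hsub]
  rw [hradial] at hμφ
  have h2π : (0:ℝ) < 2 * Real.pi := by positivity
  have hstep1 : ∫ z : ℂ, φ z ∂μ = - ∫ t in t1..t2, t ^ α * H2f t := by
    apply mul_left_cancel₀ h2π.ne'
    rw [← hμφ]
    ring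
  -- first integration by parts
  have huIcc : uIcc t1 t2 = Icc t1 t2 := uIcc_of_le ht1t2.le
  have hposIcc : ∀ x ∈ uIcc t1 t2, 0 < x := by
    rw [huIcc]; rintro x ⟨hx, -⟩; linarith
  have hu1 : ∀ x ∈ uIcc t1 t2, HasDerivAt (fun t : ℝ => t ^ α) (α * x ^ (α - 1)) x :=
    fun x hx => Real.hasDerivAt_rpow_const (Or.inl (hposIcc x hx).ne')
  have hdiff1 : Differentiable ℝ H1 := hH1c.differentiable (by simp)
  have hdiffH : Differentiable ℝ H := hH.differentiable (by simp)
  have hv1 : ∀ x ∈ uIcc t1 t2, HasDerivAt H1 (H2f x) x :=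
    fun x _ => (hdiff1 x).hasDerivAt
  have hint1 : IntervalIntegrable (fun x : ℝ => α * x ^ (α - 1)) volume t1 t2 := by
    apply ContinuousOn.intervalIntegrable
    intro x hx
    exact (continuousAt_const.mul
      (Real.continuousAt_rpow_const _ _ (Or.inl (hposIcc x hx).ne'))).continuousWithinAt
  have hint2 : IntervalIntegrable H2f volume t1 t2 := hH2c.continuous.intervalIntegrable _ _
  have hIBP1 := intervalIntegral.integral_mul_deriv_eq_deriv_mul hu1 hv1 hint1 hint2
  have hH1a : H1 t1 = 0 := H1_zero hsupp (Or.inl h1a)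
  have hH1b : H1 t2 = 0 := H1_zero hsupp (Or.inr hbt2)
  rw [hH1a, hH1b] at hIBP1
  simp only [mul_zero, sub_zero, zero_sub] at hIBP1
  -- second integration by parts
  have hu2 : ∀ x ∈ uIcc t1 t2,
      HasDerivAt (fun t : ℝ => α * t ^ (α - 1)) (α * ((α - 1) * x ^ (α - 2))) x := by
    intro x hx
    have h := (Real.hasDerivAt_rpow_const (p := α - 1) (Or.inl (hposIcc x hx).ne')).const_mul α
    have he : α - 1 - 1 = α - 2 := by ring
    rwa [he] at h
  have hv2 : ∀ x ∈ uIcc t1 t2, HasDerivAt H (H1 x) x := fun x _ => (hdiffH x).hasDerivAt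
  have hint3 : IntervalIntegrable (fun x : ℝ => α * ((α - 1) * x ^ (α - 2))) volume t1 t2 := by
    apply ContinuousOn.intervalIntegrable
    intro x hx
    exact (continuousAt_const.mul (continuousAt_const.mul
      (Real.continuousAt_rpow_const _ _ (Or.inl (hposIcc x hx).ne')))).continuousWithinAt
  have hint4 : IntervalIntegrable H1 volume t1 t2 := hH1c.continuous.intervalIntegrable _ _
  have hIBP2 := intervalIntegral.integral_mul_deriv_eq_deriv_mul hu2 hv2 hint3 hint4
  rw [H_zero hsupp (Or.inr hbt2), H_zero hsupp (Or.inl h1a)] at hIBP2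
  simp only [mul_zero, sub_zero, zero_sub] at hIBP2
  -- combine
  have hconst : ∫ t in t1..t2, α * ((α - 1) * t ^ (α - 2)) * H t
      = (α * (α - 1)) * ∫ t in t1..t2, t ^ (α - 2) * H t := by
    rw [← intervalIntegral.integral_const_mul]
    apply intervalIntegral.integral_congr
    intro x _
    ring
  rw [hstep1, hIBP1, hIBP2, hconst]
  ring


/-! ### The bump family -/

def bump (α c δ : ℝ) (n : ℕ) (t : ℝ) : ℝ :=
  Real.smoothTransition ((t - c - δ)/δ) * t ^ α * Real.smoothTransition ((n:ℝ) + 1 - t)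

variable {α c δ : ℝ} {n : ℕ}

lemma bump_zero_left (ht : c + δ ≥ (0:ℝ) → True) (hδ : 0 < δ) {t : ℝ} (h : t ≤ c + δ) :
    bump α c δ n t = 0 := by
  have : (t - c - δ)/δ ≤ 0 := div_nonpos_of_nonpos_of_nonneg (by linarith) hδ.le
  simp [bump, Real.smoothTransition.zero_of_nonpos this]

lemma bump_zero_right {t : ℝ} (h : (n:ℝ) + 1 ≤ t) : bump α c δ n t = 0 := by
  have : (n:ℝ) + 1 - t ≤ 0 := by linarith
  simp [bump, Real.smoothTransition.zero_of_nonpos this]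

lemma bump_supp (hδ : 0 < δ) :
    ∀ t, t ∉ Ioo (c + δ) (max ((n:ℝ) + 1) (c + δ) ) → bump α c δ n t = 0 := by
  intro t ht
  by_cases h1 : t ≤ c + δ
  · exact bump_zero_left (fun _ => trivial) hδ h1
  · push_neg at h1
    have h2 : ¬ t < max ((n:ℝ) + 1) (c + δ) := fun hc => ht ⟨h1, hc⟩
    push_neg at h2
    exact bump_zero_right (le_trans (le_max_left _ _) h2)

lemma bump_nonneg (hc : 0 < c) (hδ : 0 < δ) (t : ℝ) : 0 ≤ bump α c δ n t := by
  by_cases ht : 0 < t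
  · exact mul_nonneg (mul_nonneg (Real.smoothTransition.nonneg _)
      (Real.rpow_nonneg ht.le _)) (Real.smoothTransition.nonneg _)
  · rw [bump_zero_left (fun _ => trivial) hδ (by push_neg at ht; linarith)]

lemma bump_le {t : ℝ} (ht : 0 < t) : bump α c δ n t ≤ t ^ α := by
  have h1 := Real.smoothTransition.le_one ((t - c - δ)/δ)
  have h1' := Real.smoothTransition.nonneg ((t - c - δ)/δ)
  have h2 := Real.smoothTransition.le_one ((n:ℝ) + 1 - t)
  have h2' := Real.smoothTransition.nonneg ((n:ℝ) + 1 - t)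
  have h3 : (0:ℝ) ≤ t ^ α := Real.rpow_nonneg ht.le _
  have step1 : Real.smoothTransition ((t - c - δ)/δ) * t ^ α ≤ t ^ α := by nlinarith
  calc bump α c δ n t ≤ Real.smoothTransition ((t - c - δ)/δ) * t ^ α * 1 := by
        apply mul_le_mul_of_nonneg_left h2 (by nlinarith)
  _ = Real.smoothTransition ((t - c - δ)/δ) * t ^ α := mul_one _
  _ ≤ t ^ α := step1

lemma bump_eq (hδ : 0 < δ) {t : ℝ} (h1 : c + 2*δ ≤ t) (h2 : t ≤ (n:ℝ)) :
    bump α c δ n t = t ^ α := by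
  have e1 : Real.smoothTransition ((t - c - δ)/δ) = 1 :=
    Real.smoothTransition.one_of_one_le (by rw [le_div_iff₀ hδ]; linarith)
  have e2 : Real.smoothTransition ((n:ℝ) + 1 - t) = 1 :=
    Real.smoothTransition.one_of_one_le (by linarith)
  simp [bump, e1, e2]

lemma bump_contDiff (hc : 0 < c) (hδ : 0 < δ) : ContDiff ℝ (⊤:ℕ∞) (bump α c δ n) := by
  rw [contDiff_iff_contDiffAt]
  intro t
  by_cases ht : 0 < t
  · have haff : ContDiff ℝ (⊤:ℕ∞) (fun t : ℝ => (t - c - δ)/δ) :=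
      ((contDiff_id.sub contDiff_const).sub contDiff_const).div_const δ
    have h1 : ContDiffAt ℝ (⊤:ℕ∞) (fun t : ℝ => Real.smoothTransition ((t - c - δ)/δ)) t :=
      Real.smoothTransition.contDiff.contDiffAt.comp t haff.contDiffAt
    have h2 : ContDiffAt ℝ (⊤:ℕ∞) (fun t : ℝ => t ^ α) t :=
      Real.contDiffAt_rpow_const_of_ne ht.ne'
    have haff2 : ContDiff ℝ (⊤:ℕ∞) (fun t : ℝ => (n:ℝ) + 1 - t) :=
      contDiff_const.sub contDiff_id
    have h3 : ContDiffAt ℝ (⊤:ℕ∞) (fun t : ℝ => Real.smoothTransition ((n:ℝ) + 1 - t)) t :=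
      Real.smoothTransition.contDiff.contDiffAt.comp t haff2.contDiffAt
    exact (h1.mul h2).mul h3
  · push_neg at ht
    refine contDiffAt_const (c := 0) |>.congr_of_eventuallyEq ?_
    filter_upwards [Iio_mem_nhds (show t < c + δ by linarith)] with s hs
    exact bump_zero_left (fun _ => trivial) hδ (le_of_lt hs)


lemma phi_integrable {H : ℝ → ℝ} {a b : ℝ} (hH : ContDiff ℝ (⊤:ℕ∞) H) (ha : 0 < a)
    (hsupp : ∀ t, t ∉ Ioo a b → H t = 0) (μ : Measure ℂ) [IsFiniteMeasureOnCompacts μ] :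
    Integrable (fun z : ℂ => H (-Real.log (‖z‖))) μ := by
  set φ : ℂ → ℝ := fun z : ℂ => H (-Real.log (‖z‖)) with hφdef
  have hφc : ContDiff ℝ (⊤:ℕ∞) φ := phi_contDiff hH ha hsupp
  have hsubball : Function.support φ ⊆ closedBall (0:ℂ) (Real.exp (-a)) := by
    intro z hz
    simp only [mem_closedBall, dist_zero_right]
    by_contra hcon
    exact hz (phi_zero_far ha hsupp (le_of_lt (not_le.mp hcon)))
  have hφcs : HasCompactSupport φ :=
    HasCompactSupport.intro (isCompact_closedBall (0:ℂ) (Real.exp (-a))) fun z hz => by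
      by_contra hcon
      exact hz (hsubball (Function.mem_support.mpr hcon))
  exact hφc.continuous.integrable_of_hasCompactSupport hφcs

end EnergyProofAux

open EnergyProofAux in
/-- For `0 < α < 1`, the `L¹`-energy `E₁(u^α) = ∫ (-u^α) dd^c u^α` of the
subharmonic function `u^α(z) = -(-log|z|)^α` on the disc `{|z| < 1-ε}` is finite when
`α < 1/2` and infinite when `1/2 ≤ α`. -/
theorem energy_of_pow_log (α ε : ℝ) (hα0 : 0 < α) (hα1 : α < 1) (hε0 : 0 < ε) (hε1 : ε < 1)
    (u : ℂ → ℝ) (hu : u = fun z : ℂ => -(-Real.log (‖z‖)) ^ α)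
    (μ : Measure ℂ) [IsFiniteMeasureOnCompacts μ]
    (hμ : IsRieszMeasureOn (Metric.ball (0:ℂ) (1 - ε)) u μ) :
    (α < 1/2 →
      ∫⁻ z in Metric.ball (0:ℂ) (1 - ε), ENNReal.ofReal (-(u z)) ∂μ < ⊤) ∧
    (1/2 ≤ α →
      ∫⁻ z in Metric.ball (0:ℂ) (1 - ε), ENNReal.ofReal (-(u z)) ∂μ = ⊤) := by
  have hR0 : 0 < 1 - ε := by linarith
  have hR1 : 1 - ε < 1 := by linarith
  set T0 : ℝ := -Real.log (1 - ε) with hT0def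
  have hT0 : 0 < T0 := by
    have := Real.log_neg hR0 hR1
    rw [hT0def]; linarith
  have hαα : 0 < α * (1 - α) := by nlinarith
  -- measurability of the energy integrand
  have humeas : Measurable fun z : ℂ => ENNReal.ofReal (-(u z)) := by
    have hm : Measurable fun z : ℂ => (-Real.log (‖z‖)) ^ α :=
      (Real.continuous_rpow_const hα0.le).measurable.comp
        ((Real.measurable_log.comp continuous_norm.measurable).neg)
    have : (fun z : ℂ => ENNReal.ofReal (-(u z)))
        = fun z : ℂ => ENNReal.ofReal ((-Real.log (‖z‖)) ^ α) := by
      funext z; rw [hu]; simp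
    rw [this]
    exact ENNReal.measurable_ofReal.comp hm
  -- value of -u off 0
  have humval : ∀ z : ℂ, -(u z) = (-Real.log (‖z‖)) ^ α := by
    intro z; rw [hu]; simp
  have hu0 : -(u 0) = 0 := by
    rw [humval]; simp [Real.zero_rpow hα0.ne']
  -- the key identity, specialized to bumps
  have hkey : ∀ δ : ℝ, 0 < δ → ∀ n : ℕ,
      ∫ z : ℂ, bump α T0 δ n (-Real.log (‖z‖)) ∂μ
        = α * (1 - α) * ∫ t in (T0 + δ/2)..(max ((n:ℝ)+1) (T0+δ) + 1),
            t ^ (α - 2) * bump α T0 δ n t := by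
    intro δ hδ n
    refine EnergyProofAux.key α (1-ε) hα0 hα1 hR0 hR1 u hu μ hμ _ (bump_contDiff hT0 hδ)
      (t1 := T0 + δ/2) (a := T0 + δ) (b := max ((n:ℝ)+1) (T0+δ))
      (t2 := max ((n:ℝ)+1) (T0+δ) + 1) ?_ ?_ ?_ ?_ (bump_supp hδ)
    · rw [← hT0def]; linarith
    · linarith
    · exact le_max_right _ _
    · linarith
  -- integrability of the bump test functions
  have hbint : ∀ δ : ℝ, 0 < δ → ∀ n : ℕ,
      Integrable (fun z : ℂ => bump α T0 δ n (-Real.log (‖z‖))) μ :=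
    fun δ hδ n => phi_integrable (bump_contDiff hT0 hδ) (by linarith) (bump_supp hδ) μ
  -- positivity / domination on the ball
  have hudom : ∀ δ : ℝ, 0 < δ → ∀ n : ℕ, ∀ z ∈ Metric.ball (0:ℂ) (1-ε),
      bump α T0 δ n (-Real.log (‖z‖)) ≤ -(u z) := by
    intro δ hδ n z hz
    by_cases hz0 : z = 0
    · subst hz0
      rw [hu0]
      have : ‖(0:ℂ)‖ = 0 := norm_zero
      rw [this, Real.log_zero, neg_zero,
        bump_zero_left (fun _ => trivial) hδ (by linarith)]
    · have habs : 0 < ‖z‖ := by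
        simpa [norm_pos_iff] using hz0
      have hzlt : ‖z‖ < 1 - ε := by
        simpa [Metric.mem_ball, Complex.dist_eq] using hz
      have hslog : T0 < -Real.log (‖z‖) := by
        have := Real.log_lt_log habs hzlt
        rw [hT0def]; linarith
      rw [humval]
      exact bump_le (by linarith)
  constructor
  · -- convergent case
    intro hhalf
    have h2α : 2*α - 2 ≠ -1 := by intro h; linarith
    set C : ℝ := α * (1-α) * (T0 ^ (2*α-1) / (1-2*α)) with hC
    -- uniform bound for all bump integrals
    have hub : ∀ δ : ℝ, 0 < δ → ∀ n : ℕ,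
        ∫ z : ℂ, bump α T0 δ n (-Real.log (‖z‖)) ∂μ ≤ C := by
      intro δ hδ n
      rw [hkey δ hδ n]
      set t1 : ℝ := T0 + δ/2 with ht1def
      set t2 : ℝ := max ((n:ℝ)+1) (T0+δ) + 1 with ht2def
      have ht1pos : 0 < t1 := by rw [ht1def]; linarith
      have ht1t2 : t1 ≤ t2 := by
        have := le_max_right ((n:ℝ)+1) (T0+δ)
        rw [ht1def, ht2def]; linarith
      have hposIcc : ∀ x ∈ uIcc t1 t2, 0 < x := by
        rw [uIcc_of_le ht1t2]; rintro x ⟨hx, -⟩; linarith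
      have hint1 : IntervalIntegrable (fun t : ℝ => t ^ (α-2) * bump α T0 δ n t) volume t1 t2 := by
        apply ContinuousOn.intervalIntegrable
        intro x hx
        exact ((Real.continuousAt_rpow_const _ _ (Or.inl (hposIcc x hx).ne')).mul
          (bump_contDiff (n := n) hT0 hδ).continuous.continuousAt).continuousWithinAt
      have hint2 : IntervalIntegrable (fun t : ℝ => t ^ (2*α-2)) volume t1 t2 := by
        apply ContinuousOn.intervalIntegrable
        intro x hx
        exact (Real.continuousAt_rpow_const _ _ (Or.inl (hposIcc x hx).ne')).continuousWithinAt
      have hmono : ∫ t in t1..t2, t ^ (α-2) * bump α T0 δ n t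
          ≤ ∫ t in t1..t2, t ^ (2*α-2) := by
        apply intervalIntegral.integral_mono_on ht1t2 hint1 hint2
        intro t ht
        have htpos : 0 < t := by rcases ht with ⟨h1, -⟩; linarith
        calc t ^ (α-2) * bump α T0 δ n t ≤ t ^ (α-2) * t ^ α :=
              mul_le_mul_of_nonneg_left (bump_le htpos) (Real.rpow_nonneg htpos.le _)
        _ = t ^ (2*α-2) := by
              rw [← Real.rpow_add htpos]; congr 1; ring
      have hval : ∫ t in t1..t2, t ^ (2*α-2)
          = (t2 ^ (2*α-1) - t1 ^ (2*α-1)) / (2*α-1) := by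
        rw [integral_rpow (Or.inr ⟨h2α, fun h => by
          rw [uIcc_of_le ht1t2] at h
          exact absurd h.1 (by linarith)⟩)]
        have he : 2*α-2+1 = 2*α-1 := by ring
        rw [he]
      have hfinal : (t2 ^ (2*α-1) - t1 ^ (2*α-1)) / (2*α-1)
          ≤ T0 ^ (2*α-1) / (1-2*α) := by
        have hno1 : 2*α-1 ≠ 0 := by intro h; linarith
        have hno2 : (0:ℝ) < 1-2*α := by linarith
        have e1 : 0 ≤ t2 ^ (2*α-1) := Real.rpow_nonneg (by linarith) _
        have e2 : t1 ^ (2*α-1) ≤ T0 ^ (2*α-1) :=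
          Real.rpow_le_rpow_of_nonpos hT0 (by rw [ht1def]; linarith) (by linarith)
        have hrw : (t2 ^ (2*α-1) - t1 ^ (2*α-1)) / (2*α-1)
            = (t1 ^ (2*α-1) - t2 ^ (2*α-1)) / (1-2*α) := by
          field_simp
          ring
        rw [hrw]
        exact (div_le_div_iff_of_pos_right hno2).mpr (by linarith)
      calc α * (1-α) * ∫ t in t1..t2, t ^ (α-2) * bump α T0 δ n t
          ≤ α * (1-α) * (T0 ^ (2*α-1) / (1-2*α)) := by
            apply mul_le_mul_of_nonneg_left _ hαα.le
            exact le_trans hmono (le_trans (le_of_eq hval) hfinal)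
      _ = C := hC.symm
    -- exhaustion of the ball
    set f : ℂ → ℝ≥0∞ := fun z => ENNReal.ofReal (-(u z)) with hf
    set Rm : ℕ → ℝ := fun m => (1-ε) * Real.exp (-(1/((m:ℝ)+1))) with hRm
    have hRmpos : ∀ m, 0 < Rm m := fun m => mul_pos hR0 (Real.exp_pos _)
    have hRmlt : ∀ m, Rm m < 1-ε := by
      intro m
      have h1 : Real.exp (-(1/((m:ℝ)+1))) < 1 := by
        rw [Real.exp_lt_one_iff]
        have : (0:ℝ) < 1/((m:ℝ)+1) := by positivity
        linarith
      calc Rm m < (1-ε) * 1 := by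
            apply mul_lt_mul_of_pos_left h1 hR0
      _ = 1-ε := mul_one _
    have hRmmono : Monotone Rm := by
      intro m m' hmm'
      apply mul_le_mul_of_nonneg_left _ hR0.le
      apply Real.exp_le_exp.mpr
      have h1 : (0:ℝ) < (m:ℝ)+1 := by positivity
      have h2 : (m:ℝ)+1 ≤ (m':ℝ)+1 := by
        have : (m:ℝ) ≤ (m':ℝ) := by exact_mod_cast hmm'
        linarith
      have := one_div_le_one_div_of_le h1 h2
      linarith
    -- bound for each piece of the exhaustion
    have hboundm : ∀ m : ℕ, ∫⁻ z, (Metric.ball (0:ℂ) (Rm m)).indicator f z ∂μ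
        ≤ ENNReal.ofReal C := by
      intro m
      set δm : ℝ := 1/(2*((m:ℝ)+1)) with hδm
      have hδmpos : 0 < δm := by rw [hδm]; positivity
      have h2δm : 2*δm = 1/((m:ℝ)+1) := by
        rw [hδm]; field_simp
      -- pointwise inequality against the liminf of the bumps
      have hpt : ∀ z : ℂ, (Metric.ball (0:ℂ) (Rm m)).indicator f z
          ≤ liminf (fun n : ℕ =>
              ENNReal.ofReal (bump α T0 δm n (-Real.log (‖z‖)))) atTop := by
        intro z
        by_cases hz : z ∈ Metric.ball (0:ℂ) (Rm m)
        · rw [indicator_of_mem hz]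
          by_cases hz0 : z = 0
          · subst hz0
            simp only [hf]
            rw [hu0]
            simp
          · have habs : 0 < ‖z‖ := by
              simpa [norm_pos_iff] using hz0
            have hzR : ‖z‖ < Rm m := by
              simpa [Metric.mem_ball, Complex.dist_eq] using hz
            have hlogRm : Real.log (Rm m) = Real.log (1-ε) + (-(1/((m:ℝ)+1))) := by
              rw [hRm]
              rw [Real.log_mul hR0.ne' (Real.exp_pos _).ne', Real.log_exp]
            have hs : T0 + 2*δm ≤ -Real.log (‖z‖) := by
              have := Real.log_lt_log habs hzR
              rw [hlogRm] at this
              rw [h2δm, hT0def]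
              linarith
            have hflim : ∀ᶠ n : ℕ in atTop,
                f z ≤ ENNReal.ofReal (bump α T0 δm n (-Real.log (‖z‖))) := by
              filter_upwards [eventually_ge_atTop ⌈-Real.log (‖z‖)⌉₊] with n hn
              have hsn : -Real.log (‖z‖) ≤ (n:ℝ) :=
                le_trans (Nat.le_ceil _) (by exact_mod_cast hn)
              rw [bump_eq hδmpos hs hsn]
              simp only [hf]
              rw [humval]
            exact le_liminf_of_le (by isBoundedDefault) hflim
        · rw [indicator_of_notMem hz]
          exact zero_le
      have hmeasn : ∀ n : ℕ, Measurable (fun z : ℂ =>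
          ENNReal.ofReal (bump α T0 δm n (-Real.log (‖z‖)))) := by
        intro n
        exact ENNReal.measurable_ofReal.comp
          ((bump_contDiff hT0 hδmpos).continuous.measurable.comp
            ((Real.measurable_log.comp continuous_norm.measurable).neg))
      calc ∫⁻ z, (Metric.ball (0:ℂ) (Rm m)).indicator f z ∂μ
          ≤ ∫⁻ z, liminf (fun n : ℕ =>
              ENNReal.ofReal (bump α T0 δm n (-Real.log (‖z‖)))) atTop ∂μ :=
            lintegral_mono hpt
      _ ≤ liminf (fun n : ℕ => ∫⁻ z,
              ENNReal.ofReal (bump α T0 δm n (-Real.log (‖z‖))) ∂μ) atTop :=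
            lintegral_liminf_le hmeasn
      _ ≤ ENNReal.ofReal C := by
            apply liminf_le_of_le (by isBoundedDefault)
            intro c hc
            obtain ⟨n, hn⟩ := hc.exists
            have heq : ∫⁻ z, ENNReal.ofReal (bump α T0 δm n (-Real.log (‖z‖))) ∂μ
                = ENNReal.ofReal (∫ z : ℂ, bump α T0 δm n (-Real.log (‖z‖)) ∂μ) :=
              (MeasureTheory.ofReal_integral_eq_lintegral_ofReal (hbint δm hδmpos n)
                (ae_of_all _ fun z => bump_nonneg hT0 hδmpos _)).symm
            rw [heq] at hn
            exact le_trans hn (ENNReal.ofReal_le_ofReal (hub δm hδmpos n))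
    -- assemble via monotone convergence
    have hindicator : (fun z => (Metric.ball (0:ℂ) (1-ε)).indicator f z)
        = fun z => ⨆ m, (Metric.ball (0:ℂ) (Rm m)).indicator f z := by
      funext z
      by_cases hz : z ∈ Metric.ball (0:ℂ) (1-ε)
      · rw [indicator_of_mem hz]
        have hzn : ‖z‖ < 1-ε := by
          simpa [Metric.mem_ball, dist_zero_right] using hz
        obtain ⟨m, hm⟩ : ∃ m, ‖z‖ < Rm m := by
          have h1 : Tendsto (fun m : ℕ => -(1/((m:ℝ)+1))) atTop (𝓝 0) := by
            have := tendsto_one_div_add_atTop_nhds_zero_nat (𝕜 := ℝ)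
            simpa using this.neg
          have h2 : Tendsto (fun m : ℕ => Real.exp (-(1/((m:ℝ)+1)))) atTop (𝓝 1) := by
            have := (Real.continuous_exp.continuousAt (x := (0:ℝ))).tendsto.comp h1
            simpa [Function.comp_def] using this
          have h3 : Tendsto Rm atTop (𝓝 (1-ε)) := by
            have := h2.const_mul (1-ε)
            simpa [hRm, mul_comm] using this
          exact (h3.eventually (eventually_gt_nhds hzn)).exists
        apply le_antisymm
        · refine le_iSup_of_le m ?_
          rw [indicator_of_mem (by simpa [Metric.mem_ball, dist_zero_right] using hm)]
        · apply iSup_le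
          intro m'
          by_cases hz' : z ∈ Metric.ball (0:ℂ) (Rm m')
          · rw [indicator_of_mem hz']
          · rw [indicator_of_notMem hz']; exact zero_le
      · rw [indicator_of_notMem hz]
        symm
        rw [ENNReal.iSup_eq_zero]
        intro m
        have : z ∉ Metric.ball (0:ℂ) (Rm m) := by
          intro hc
          exact hz (Metric.ball_subset_ball (hRmlt m).le hc)
        rw [indicator_of_notMem this]
    calc ∫⁻ z in Metric.ball (0:ℂ) (1-ε), f z ∂μ
        = ∫⁻ z, (Metric.ball (0:ℂ) (1-ε)).indicator f z ∂μ :=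
          (lintegral_indicator measurableSet_ball f).symm
    _ = ∫⁻ z, ⨆ m, (Metric.ball (0:ℂ) (Rm m)).indicator f z ∂μ := by rw [hindicator]
    _ = ⨆ m, ∫⁻ z, (Metric.ball (0:ℂ) (Rm m)).indicator f z ∂μ := by
          apply lintegral_iSup'
          · exact fun m => (humeas.indicator measurableSet_ball).aemeasurable
          · apply ae_of_all
            intro z m m' hmm'
            show (Metric.ball (0:ℂ) (Rm m)).indicator f z
              ≤ (Metric.ball (0:ℂ) (Rm m')).indicator f z
            by_cases hz : z ∈ Metric.ball (0:ℂ) (Rm m)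
            · rw [indicator_of_mem hz, indicator_of_mem
                (Metric.ball_subset_ball (mul_le_mul_of_nonneg_left
                  (Real.exp_le_exp.mpr (by
                    have h1 : (0:ℝ) < (m:ℝ)+1 := by positivity
                    have h2 : (m:ℝ)+1 ≤ (m':ℝ)+1 := by
                      have : (m:ℝ) ≤ (m':ℝ) := by exact_mod_cast hmm'
                      linarith
                    have := one_div_le_one_div_of_le h1 h2
                    linarith)) hR0.le) hz)]
            · rw [indicator_of_notMem hz]; exact zero_le
    _ ≤ ENNReal.ofReal C := iSup_le hboundm
    _ < ⊤ := ENNReal.ofReal_lt_top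
  · -- divergent case
    intro hhalf
    set c' : ℝ := T0 + 2 with hc'
    have hc'pos : (0:ℝ) < c' := by rw [hc']; linarith
    have hc'one : (1:ℝ) ≤ c' := by rw [hc']; linarith
    -- lower bound for the bump integrals
    have hlow : ∀ n : ℕ, c' + 1 ≤ (n:ℝ) →
        α*(1-α) * Real.log ((n:ℝ)/c')
          ≤ ∫ z : ℂ, bump α T0 1 n (-Real.log (‖z‖)) ∂μ := by
      intro n hn
      rw [hkey 1 one_pos n]
      have hb : max ((n:ℝ)+1) (T0+1) = (n:ℝ)+1 := max_eq_left (by linarith)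
      rw [hb]
      set t1 : ℝ := T0 + 1/2 with ht1def
      set t2 : ℝ := (n:ℝ)+1+1 with ht2def
      have ht1pos : 0 < t1 := by rw [ht1def]; linarith
      have horder : t1 ≤ c' ∧ c' ≤ (n:ℝ) ∧ (n:ℝ) ≤ t2 := by
        refine ⟨by rw [ht1def, hc']; linarith, by linarith, by rw [ht2def]; linarith⟩
      have hIntOn : ∀ x y : ℝ, t1 ≤ x → t1 ≤ y →
          IntervalIntegrable (fun t : ℝ => t ^ (α-2) * bump α T0 1 n t) volume x y := by
        intro x y hx hy
        apply ContinuousOn.intervalIntegrable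
        intro t ht
        have : t1 ≤ t := by
          rcases le_total x y with hxy | hxy
          · rw [uIcc_of_le hxy] at ht; linarith [ht.1]
          · rw [uIcc_of_ge hxy] at ht; linarith [ht.1]
        have htpos : 0 < t := by linarith
        exact ((Real.continuousAt_rpow_const _ _ (Or.inl htpos.ne')).mul
          (bump_contDiff (n := n) hT0 one_pos).continuous.continuousAt).continuousWithinAt
      have hnonneg : ∀ x y : ℝ, t1 ≤ x → x ≤ y →
          0 ≤ ∫ t in x..y, t ^ (α-2) * bump α T0 1 n t := by
        intro x y hx hxy
        apply intervalIntegral.integral_nonneg hxy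
        intro t ht
        have htpos : 0 < t := by linarith [ht.1]
        exact mul_nonneg (Real.rpow_nonneg htpos.le _) (bump_nonneg hT0 one_pos t)
      have hsplit1 : ∫ t in t1..t2, t ^ (α-2) * bump α T0 1 n t
          = (∫ t in t1..c', t ^ (α-2) * bump α T0 1 n t)
            + ∫ t in c'..t2, t ^ (α-2) * bump α T0 1 n t :=
        (intervalIntegral.integral_add_adjacent_intervals
          (hIntOn t1 c' le_rfl horder.1) (hIntOn c' t2 horder.1 (by linarith [horder.2.1, horder.2.2]))).symm
      have hsplit2 : ∫ t in c'..t2, t ^ (α-2) * bump α T0 1 n t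
          = (∫ t in c'..(n:ℝ), t ^ (α-2) * bump α T0 1 n t)
            + ∫ t in (n:ℝ)..t2, t ^ (α-2) * bump α T0 1 n t :=
        (intervalIntegral.integral_add_adjacent_intervals
          (hIntOn c' (n:ℝ) horder.1 (by linarith [horder.2.1]))
          (hIntOn (n:ℝ) t2 (by linarith [horder.2.1]) (by linarith [horder.2.2]))).symm
      have hmid : Real.log ((n:ℝ)/c') ≤ ∫ t in c'..(n:ℝ), t ^ (α-2) * bump α T0 1 n t := by
        have hcn : c' ≤ (n:ℝ) := horder.2.1
        have hint1 : IntervalIntegrable (fun t : ℝ => 1/t) volume c' (n:ℝ) := by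
          apply ContinuousOn.intervalIntegrable
          intro t ht
          rw [uIcc_of_le hcn] at ht
          have : (0:ℝ) < t := by linarith [ht.1]
          exact (continuousAt_const.div continuousAt_id this.ne').continuousWithinAt
        have hlog : ∫ t in c'..(n:ℝ), 1/t = Real.log ((n:ℝ)/c') := by
          apply integral_one_div
          intro hc
          rw [uIcc_of_le hcn] at hc
          linarith [hc.1]
        rw [← hlog]
        apply intervalIntegral.integral_mono_on hcn hint1
          (hIntOn c' (n:ℝ) horder.1 (by linarith))
        intro t ht
        have ht1' : (1:ℝ) ≤ t := le_trans hc'one ht.1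
        have htpos : (0:ℝ) < t := by linarith
        have hbeq : bump α T0 1 n t = t ^ α := by
          apply bump_eq one_pos
          · rw [hc'] at ht; linarith [ht.1]
          · exact ht.2
        rw [hbeq, ← Real.rpow_add htpos]
        calc 1/t = t ^ (-1 : ℝ) := by rw [Real.rpow_neg_one]; exact (one_div t)
        _ ≤ t ^ (α - 2 + α) := Real.rpow_le_rpow_of_exponent_le ht1' (by linarith)
      have hα1' : 0 ≤ α * (1-α) := hαα.le
      have := hnonneg t1 c' le_rfl horder.1
      have := hnonneg (n:ℝ) t2 (by linarith [horder.2.1]) horder.2.2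
      calc α*(1-α) * Real.log ((n:ℝ)/c')
          ≤ α*(1-α) * ∫ t in t1..t2, t ^ (α-2) * bump α T0 1 n t := by
            apply mul_le_mul_of_nonneg_left _ hα1'
            rw [hsplit1, hsplit2]
            linarith [hmid]
      _ = α * (1 - α) * ∫ t in t1..t2, t ^ (α-2) * bump α T0 1 n t := by ring
    -- transfer to the lintegral
    have hbound : ∀ n : ℕ, c' + 1 ≤ (n:ℝ) →
        ENNReal.ofReal (α*(1-α) * Real.log ((n:ℝ)/c'))
          ≤ ∫⁻ z in Metric.ball (0:ℂ) (1-ε), ENNReal.ofReal (-(u z)) ∂μ := by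
      intro n hn
      have h1 : ENNReal.ofReal (α*(1-α) * Real.log ((n:ℝ)/c'))
          ≤ ENNReal.ofReal (∫ z : ℂ, bump α T0 1 n (-Real.log (‖z‖)) ∂μ) :=
        ENNReal.ofReal_le_ofReal (hlow n hn)
      rw [MeasureTheory.ofReal_integral_eq_lintegral_ofReal (hbint 1 one_pos n)
        (ae_of_all _ fun z => bump_nonneg hT0 one_pos _)] at h1
      -- the lintegral over all of ℂ equals the one over the ball
      have hcompl : ∫⁻ z in (Metric.ball (0:ℂ) (1-ε))ᶜ,
          ENNReal.ofReal (bump α T0 1 n (-Real.log (‖z‖))) ∂μ = 0 := by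
        have : ∀ z ∈ (Metric.ball (0:ℂ) (1-ε))ᶜ,
            ENNReal.ofReal (bump α T0 1 n (-Real.log (‖z‖))) = 0 := by
          intro z hz
          have hz' : 1-ε ≤ ‖z‖ := by
            simp only [mem_compl_iff, Metric.mem_ball, Complex.dist_eq, sub_zero,
              not_lt] at hz
            simpa using hz
          have hlog : -Real.log (‖z‖) ≤ T0 := by
            have := Real.log_le_log hR0 hz'
            rw [hT0def]; linarith
          rw [bump_zero_left (fun _ => trivial) one_pos (by linarith)]
          simp
        rw [setLIntegral_congr_fun measurableSet_ball.compl
          this]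
        simp
      have htotal := lintegral_add_compl
        (fun z : ℂ => ENNReal.ofReal (bump α T0 1 n (-Real.log (‖z‖))))
        (measurableSet_ball (x := (0:ℂ)) (ε := 1-ε)) (μ := μ)
      rw [hcompl, add_zero] at htotal
      rw [← htotal] at h1
      refine le_trans h1 ?_
      apply setLIntegral_mono humeas
      intro z hz
      exact ENNReal.ofReal_le_ofReal (hudom 1 one_pos n z hz)
    -- conclude
    apply ENNReal.eq_top_of_forall_nnreal_le
    intro r
    set K : ℝ := (r:ℝ)/(α*(1-α)) with hK
    set n : ℕ := ⌈max (c'+1) (c' * Real.exp K)⌉₊ with hn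
    have hn1 : c' + 1 ≤ (n:ℝ) :=
      le_trans (le_max_left _ _) (Nat.le_ceil _)
    have hn2 : c' * Real.exp K ≤ (n:ℝ) :=
      le_trans (le_max_right _ _) (Nat.le_ceil _)
    have hge : (r:ℝ) ≤ α*(1-α) * Real.log ((n:ℝ)/c') := by
      have hdiv : Real.exp K ≤ (n:ℝ)/c' := by
        rw [le_div_iff₀ hc'pos]
        linarith [hn2]
      have hlogge : K ≤ Real.log ((n:ℝ)/c') := by
        have := Real.log_le_log (Real.exp_pos K) hdiv
        rwa [Real.log_exp] at this
      have : α*(1-α) * K ≤ α*(1-α) * Real.log ((n:ℝ)/c') :=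
        mul_le_mul_of_nonneg_left hlogge hαα.le
      rw [hK] at this
      rw [mul_div_cancel₀ _ hαα.ne'] at this
      exact this
    calc (r : ℝ≥0∞) = ENNReal.ofReal (r:ℝ) := (ENNReal.ofReal_coe_nnreal).symm
    _ ≤ ENNReal.ofReal (α*(1-α) * Real.log ((n:ℝ)/c')) := ENNReal.ofReal_le_ofReal hge
    _ ≤ _ := hbound n hn1

end
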